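/- Let m be a positive integer, B > 0, and let θ̂ ∈ ℝ^{m+1} be a vector with ‖θ̂‖_∞ ≤ B. Suppose there exists an index i ∈ {0,...,m-1} with θ̂(i) > 0 and θ̂(i+1) ≤ 0. Define the probability weights w(i) = θ̂(i+1)/(θ̂(i+1) − θ̂(i)) and w(i+1) = θ̂(i)/(θ̂(i) − θ̂(i+1)) (all other coordinates zero). Then w(i), w(i+1) ≥ 0, w(i) + w(i+1) = 1, and for every y ∈ [0,1]: θ̂(i)·w(i)·(y − i/m) + θ̂(i+1)·w(i+1)·(y − (i+1)/m) ≤ B/m. -/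

import Mathlib

theorem halfspace_oracle_middle_case
    (m : ℕ) (hm : 0 < m) (B : ℝ) (hB : 0 < B)
    (θ : Fin (m + 1) → ℝ) (hθ : ∀ i, |θ i| ≤ B)
    (i : ℕ) (hi : i < m)
    (hpos : θ ⟨i, by omega⟩ > 0) (hneg : θ ⟨i + 1, by omega⟩ ≤ 0) :
    let a := θ ⟨i, by omega⟩
    let b := θ ⟨i + 1, by omega⟩
    let wi := b / (b - a)
    let wi1 := a / (a - b)
    0 ≤ wi ∧ 0 ≤ wi1 ∧ wi + wi1 = 1 ∧
      ∀ y : ℝ, y ∈ Set.Icc (0 : ℝ) 1 →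
        a * wi * (y - (i : ℝ) / m) + b * wi1 * (y - ((i : ℝ) + 1) / m) ≤ B / m := by
  intro a b wi wi1
  have ha : 0 < a := hpos
  have hb : b ≤ 0 := hneg
  have hba : b - a < 0 := by linarith
  have hab : 0 < a - b := by linarith
  have hm' : (0 : ℝ) < m := by exact_mod_cast hm
  have hwi : 0 ≤ wi := by rw [div_nonneg_iff]; right; exact ⟨hb, hba.le⟩
  have hwi1 : 0 ≤ wi1 := div_nonneg ha.le hab.le
  have hsum : wi + wi1 = 1 := by
    simp only [wi, wi1]
    field_simp [wi, wi1, hba.ne, hab.ne']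
    ring
  refine ⟨hwi, hwi1, hsum, ?_⟩
  intro y _
  have hwile : wi ≤ 1 := by linarith
  have haB : a ≤ B := le_of_abs_le (hθ _)
  have key : a * wi * (y - (i : ℝ) / m) + b * wi1 * (y - ((i : ℝ) + 1) / m)
      = a * wi / m := by
    simp only [wi, wi1]
    field_simp [wi, wi1, hba.ne, hm'.ne']
    ring
  rw [key]
  have : a * wi ≤ B := by
    calc a * wi ≤ a * 1 := by nlinarith
    _ = a := mul_one a
    _ ≤ B := haB
  exact div_le_div_of_nonneg_right this hm'.le
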